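/- Let X be a topological space and let V be an ultrafilter on W(X) = (Ultrafilter X, ^S T). Let p be the ultrafilter on X defined by A ∈ p ↔ {U : Ultrafilter X | A ∈ U} ∈ V (the monadic join of V). Then the set of cluster points of V in W(X) equals the ^S T-closure of the singleton {p}. In particular W(X) is supercompact. -/
import Mathlib

/-- The "standard" topology `^S T` on the space of ultrafilters `W(X) = Ultrafilter X`,
generated by the sets `Ĝ = {U | G ∈ U}` for `G` open in `X`. -/
def sTop (X : Type*) [TopologicalSpace X] : TopologicalSpace (Ultrafilter X) :=
  TopologicalSpace.generateFrom
    {s : Set (Ultrafilter X) | ∃ G : Set X, IsOpen G ∧ s = {U : Ultrafilter X | G ∈ U}}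

theorem stmt3_key (X : Type*) [TopologicalSpace X] (V : Ultrafilter (Ultrafilter X))
    (p : Ultrafilter X) (hp : ∀ A : Set X, A ∈ p ↔ {U : Ultrafilter X | A ∈ U} ∈ V) :
    {z : Ultrafilter X | @ClusterPt (Ultrafilter X) (sTop X) z ↑V}
        = @closure (Ultrafilter X) (sTop X) {p} := by
  letI : TopologicalSpace (Ultrafilter X) := sTop X
  set g : Set (Set (Ultrafilter X)) :=
    {s : Set (Ultrafilter X) | ∃ G : Set X, IsOpen G ∧ s = {U : Ultrafilter X | G ∈ U}} with hg
  ext z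
  simp only [Set.mem_setOf_eq]
  have hcl : ClusterPt z ↑V ↔ ∀ G : Set X, IsOpen G → G ∈ z → G ∈ p := by
    rw [Ultrafilter.clusterPt_iff]
    have : nhds z = ⨅ s ∈ {s | z ∈ s ∧ s ∈ g}, Filter.principal s :=
      TopologicalSpace.nhds_generateFrom
    rw [this]
    simp only [le_iInf_iff, Filter.le_principal_iff, Set.mem_setOf_eq, and_imp]
    constructor
    · intro h G hG hGz
      rw [hp]
      exact h _ hGz ⟨G, hG, rfl⟩
    · rintro h s hzs ⟨G, hG, rfl⟩
      exact (hp G).mp (h G hG hzs)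
  rw [hcl]
  rw [mem_closure_iff]
  constructor
  · intro h o ho hzo
    refine ⟨p, ?_, rfl⟩
    have ho' : TopologicalSpace.GenerateOpen g o := ho
    clear ho
    induction ho' with
    | basic s hs =>
        obtain ⟨G, hG, rfl⟩ := hs
        exact h G hG hzo
    | univ => trivial
    | inter s t _ _ ihs iht => exact ⟨ihs hzo.1, iht hzo.2⟩
    | sUnion S _ ih =>
        obtain ⟨s, hsS, hzs⟩ := hzo
        exact ⟨s, hsS, ih s hsS hzs⟩
  · intro h G hG hGz
    have hopen : IsOpen {U : Ultrafilter X | G ∈ U} :=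
      TopologicalSpace.isOpen_generateFrom_of_mem ⟨G, hG, rfl⟩
    obtain ⟨q, hq1, hq2⟩ := h _ hopen hGz
    rw [Set.mem_singleton_iff] at hq2
    subst hq2
    exact hq1

theorem stmt3 (X : Type*) [TopologicalSpace X] (V : Ultrafilter (Ultrafilter X))
    (p : Ultrafilter X) (hp : ∀ A : Set X, A ∈ p ↔ {U : Ultrafilter X | A ∈ U} ∈ V) :
    ({z : Ultrafilter X | @ClusterPt (Ultrafilter X) (sTop X) z ↑V}
        = @closure (Ultrafilter X) (sTop X) {p}) ∧
    (∀ W : Ultrafilter (Ultrafilter X), ∃ q : Ultrafilter X,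
      {z : Ultrafilter X | @ClusterPt (Ultrafilter X) (sTop X) z ↑W}
        = @closure (Ultrafilter X) (sTop X) {q}) := by
  refine ⟨stmt3_key X V p hp, fun W => ⟨W.bind id, stmt3_key X W (W.bind id) ?_⟩⟩
  intro A
  exact Filter.mem_bind'
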